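/- arXiv:2109.04923 — 2 statements merged into one kernel-verified Lean document; each statement's English description precedes it below -/
import Mathlib

section
/- An 𝔽_p-linear bijection A of M × M normalizes S_R (i.e., A^{-1}·S_R·A = S_R) if and only if there exist c₁, c₂, c₃, c₄ ∈ M and an integer t with 0 ≤ t < m such that A(x,y) = (c₁x^{p^t} + c₂y^{p^t}, c₃x^{p^t} + c₄y^{p^t}) for all (x,y) ∈ M × M; moreover the normalizer of S_R in GL(M × M) coincides with the normalizer of the full group S = {diag(m_a, m_a) : a ∈ M^×}. -/
/-- The map `diag(m_a, m_a) : (x,y) ↦ (ax, ay)` of `M × M`. -/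
def diagMul (K : Type) [Field K] (a : K) : K × K → K × K := fun z => (a * z.1, a * z.2)

/-- Conjugation of a set of self-maps of `M × M` by the additive bijection `A`:
`A⁻¹·S·A = {A⁻¹ ∘ f ∘ A : f ∈ S}`. -/
def conjSet (K : Type) [Field K] (A : K × K ≃+ K × K) (S : Set (K × K → K × K)) :
    Set (K × K → K × K) :=
  (fun f => (A.symm : K × K → K × K) ∘ f ∘ (A : K × K → K × K)) '' S

section Helpers

variable {K : Type} [Field K] [Fintype K]

lemma diagMul_eq_smul (a : K) : diagMul K a = fun z : K × K => a • z := rfl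

lemma aux_charP {p m : ℕ} (hp : p.Prime) (hm : 0 < m) (hcard : Fintype.card K = p ^ m) :
    CharP K p := by
  obtain ⟨q, hq⟩ := CharP.exists K
  haveI := hq
  obtain ⟨n, hqp, hcard'⟩ := FiniteField.card K q
  have hqdvd : q ∣ p ^ m := by
    rw [← hcard, hcard']; exact dvd_pow_self q n.ne_zero
  have : q = p := (Nat.prime_dvd_prime_iff_eq hqp hp).mp (hqp.dvd_of_dvd_pow hqdvd)
  subst this; exact hq

set_option linter.unusedSectionVars false
set_option linter.unusedVariables false

lemma semilinear_of_conj (A : K × K ≃+ K × K) (T : Set K)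
    (hT : Subring.closure T = ⊤)
    (h : ∀ b ∈ T, ∃ a : K, ∀ v : K × K, A (b • v) = a • A v) :
    ∃ σ : K →+* K, ∀ (c : K) (v : K × K), A (c • v) = σ c • A v := by
  set S' : Subring K :=
    { carrier := {c : K | ∃ d : K, ∀ v : K × K, A (c • v) = d • A v}
      zero_mem' := ⟨0, fun v => by rw [zero_smul, map_zero, zero_smul]⟩
      one_mem' := ⟨1, fun v => by rw [one_smul, one_smul]⟩
      add_mem' := by
        rintro c c' ⟨d, hd⟩ ⟨d', hd'⟩
        exact ⟨d + d', fun v => by rw [add_smul, map_add, hd, hd', add_smul]⟩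
      neg_mem' := by
        rintro c ⟨d, hd⟩
        exact ⟨-d, fun v => by rw [neg_smul, map_neg, hd, neg_smul]⟩
      mul_mem' := by
        rintro c c' ⟨d, hd⟩ ⟨d', hd'⟩
        exact ⟨d * d', fun v => by rw [mul_smul, hd, hd', mul_smul]⟩ } with hS'def
  have hS' : ∀ c : K, ∃ d : K, ∀ v : K × K, A (c • v) = d • A v := by
    intro c
    have hle : Subring.closure T ≤ S' := Subring.closure_le.mpr h
    rw [hT] at hle
    exact hle trivial
  set v₀ := A.symm (1, 0) with hv₀
  have hAv₀ : A v₀ = (1, 0) := A.apply_symm_apply _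
  set σf : K → K := fun c => (A (c • v₀)).1 with hσf
  have hkey : ∀ (c : K) (v : K × K), A (c • v) = σf c • A v := by
    intro c v
    obtain ⟨d, hd⟩ := hS' c
    have hσd : σf c = d := by
      have h1 := hd v₀
      rw [hAv₀] at h1
      simp [hσf, h1, smul_eq_mul]
    rw [hσd]; exact hd v
  refine ⟨{ toFun := σf, map_one' := ?_, map_mul' := ?_, map_zero' := ?_, map_add' := ?_ }, hkey⟩
  · show (A ((1:K) • v₀)).1 = 1
    rw [one_smul, hAv₀]
  · intro c c'
    show (A ((c * c') • v₀)).1 = σf c * σf c'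
    rw [mul_smul, hkey, hkey, hAv₀]
    simp [smul_eq_mul]
  · show (A ((0:K) • v₀)).1 = 0
    rw [zero_smul, map_zero]; rfl
  · intro c c'
    show (A ((c + c') • v₀)).1 = σf c + σf c'
    rw [add_smul, map_add]; rfl

lemma ringHom_eq_pow {p m : ℕ} (hp : p.Prime) (hm : 0 < m)
    (hcard : Fintype.card K = p ^ m) (σ : K →+* K) :
    ∃ t : ℕ, t < m ∧ ∀ x : K, σ x = x ^ p ^ t := by
  classical
  haveI : Fact p.Prime := ⟨hp⟩
  haveI : CharP K p := aux_charP hp hm hcard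
  letI : Algebra (ZMod p) K := ZMod.algebra K p
  have hfr : Module.finrank (ZMod p) K = m := by
    have hc := Module.card_eq_pow_finrank (K := ZMod p) (V := K)
    rw [ZMod.card, hcard] at hc
    exact (Nat.pow_right_injective hp.two_le hc.symm)
  have mkAE : ∀ f : K →+* K, ∃ e : K ≃ₐ[ZMod p] K, ∀ x, e x = f x := by
    intro f
    have hcomm : ∀ r : ZMod p, f (algebraMap (ZMod p) K r) = algebraMap (ZMod p) K r :=
      fun r => RingHom.congr_fun
        (Subsingleton.elim (f.comp (algebraMap (ZMod p) K)) (algebraMap (ZMod p) K)) r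
    have hbij : Function.Bijective f := ⟨f.injective, Finite.surjective_of_injective f.injective⟩
    exact ⟨AlgEquiv.ofBijective ⟨f, hcomm⟩ hbij, fun x => rfl⟩
  obtain ⟨F, hF⟩ := mkAE (frobenius K p)
  obtain ⟨φ, hφ⟩ := mkAE σ
  have hFpow : ∀ (t : ℕ) (x : K), (F ^ t) x = x ^ p ^ t := by
    intro t
    induction t with
    | zero => intro x; simp
    | succ t ih =>
      intro x
      rw [pow_succ, AlgEquiv.mul_apply, hF, frobenius_def, ih, ← pow_mul, ← pow_succ']
  have hFm : F ^ m = 1 := by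
    apply AlgEquiv.ext
    intro x
    rw [hFpow m x, ← hcard, FiniteField.pow_card]
    rfl
  have hlow : ∀ k : ℕ, 0 < k → F ^ k = 1 → m ≤ k := by
    intro k hk hFk
    obtain ⟨g, hg⟩ := IsCyclic.exists_generator (α := Kˣ)
    have hordg : orderOf g = p ^ m - 1 := by
      rw [orderOf_eq_card_of_forall_mem_zpowers hg, Nat.card_eq_fintype_card,
        Fintype.card_units, hcard]
    have hgk : ((g : K)) ^ p ^ k = (g : K) := by
      calc ((g : K)) ^ p ^ k = (F ^ k) (g : K) := (hFpow k _).symm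
        _ = (g : K) := by rw [hFk]; rfl
    have hgk' : g ^ p ^ k = g := Units.ext (by rw [Units.val_pow_eq_pow_val]; exact hgk)
    have h1 : p ^ k = (p ^ k - 1) + 1 := (Nat.succ_pred_eq_of_pos (pow_pos hp.pos k)).symm
    rw [h1, pow_succ] at hgk'
    have hone : g ^ (p ^ k - 1) = 1 :=
      mul_right_cancel (b := g) (by rw [hgk', one_mul])
    have hdvd1 : p ^ m - 1 ∣ p ^ k - 1 := by
      rw [← hordg]; exact orderOf_dvd_of_pow_eq_one hone
    have hk1 : 0 < p ^ k - 1 := by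
      have h2 : 2 ≤ p ^ k := le_trans hp.two_le (Nat.le_self_pow hk.ne' p)
      omega
    have hle := Nat.le_of_dvd hk1 hdvd1
    have hpm : 1 ≤ p ^ m := Nat.one_le_pow _ _ hp.pos
    have hpk : 1 ≤ p ^ k := Nat.one_le_pow _ _ hp.pos
    have : p ^ m ≤ p ^ k := by omega
    exact (Nat.pow_le_pow_iff_right hp.one_lt).mp this
  have hordF : orderOf F = m := by
    have hdvd' : orderOf F ∣ m := orderOf_dvd_of_pow_eq_one hFm
    have hpos : 0 < orderOf F := orderOf_pos F
    exact Nat.le_antisymm (Nat.le_of_dvd hm hdvd') (hlow _ hpos (pow_orderOf_eq_one F))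
  have hcardG : Nat.card (K ≃ₐ[ZMod p] K) = m := by
    rw [IsGalois.card_aut_eq_finrank, hfr]
  have htop : Subgroup.zpowers F = ⊤ := by
    apply Subgroup.eq_top_of_card_eq
    rw [Nat.card_zpowers, hordF, hcardG]
  have hmem : φ ∈ Subgroup.zpowers F := htop ▸ Subgroup.mem_top φ
  obtain ⟨n, hn⟩ := mem_powers_iff_mem_zpowers.mpr hmem
  refine ⟨n % m, Nat.mod_lt _ hm, ?_⟩
  intro x
  calc σ x = φ x := (hφ x).symm
    _ = (F ^ (n % m)) x := by rw [← hn, ← hordF, pow_mod_orderOf]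
    _ = x ^ p ^ (n % m) := hFpow _ x

lemma closure_R {p m p' : ℕ} (hp : p.Prime) (hm : 0 < m) (hcard : Fintype.card K = p ^ m)
    (hp' : p'.Prime) (hdvd : p' ∣ p ^ m - 1)
    (hprim : ∀ i : ℕ, 1 ≤ i → i ≤ m - 1 → ¬ p' ∣ p ^ i - 1) :
    Subring.closure {a : K | a ≠ 0 ∧ ∃ j : ℕ, orderOf a = p' ^ j} = ⊤ := by
  classical
  haveI : Fact p'.Prime := ⟨hp'⟩
  haveI : CharP K p := aux_charP hp hm hcard
  have hcu : Fintype.card Kˣ = p ^ m - 1 := by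
    rw [Fintype.card_units, hcard]
  obtain ⟨u, hu⟩ := exists_prime_orderOf_dvd_card (G := Kˣ) p' (by rw [hcu]; exact hdvd)
  have hζord : orderOf (u : K) = p' := by rw [orderOf_units, hu]
  have hζne : (u : K) ≠ 0 := u.ne_zero
  set E := Subring.closure ({(u : K)} : Set K) with hE
  have hζE : (u : K) ∈ E := Subring.subset_closure rfl
  haveI : Fintype E := Fintype.ofFinite E
  letI : Field E := (Finite.isDomain_to_isField E).toField
  haveI : CharP E p := CharP.subring K p E
  obtain ⟨d, hpd, hcardE⟩ := FiniteField.card E p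
  have hζE' : orderOf (⟨(u : K), hζE⟩ : E) = p' := by
    have horder := orderOf_injective E.subtype.toMonoidHom Subtype.val_injective
      (⟨(u : K), hζE⟩ : E)
    rw [← horder]; exact hζord
  have hne : (⟨(u : K), hζE⟩ : E) ≠ 0 := fun h => hζne (congrArg Subtype.val h)
  have hIsU : IsUnit (⟨(u : K), hζE⟩ : E) := isUnit_iff_ne_zero.mpr hne
  have hword : orderOf hIsU.unit = p' := by
    rw [← orderOf_units, hIsU.unit_spec]; exact hζE'
  have hdvd' : p' ∣ p ^ (d : ℕ) - 1 := by
    have hd := orderOf_dvd_card (x := hIsU.unit)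
    rw [hword, Fintype.card_units, hcardE] at hd
    exact hd
  have hdm : (d : ℕ) ≤ m := by
    have hle : Fintype.card E ≤ Fintype.card K :=
      Fintype.card_le_of_injective _ Subtype.val_injective
    rw [hcardE, hcard] at hle
    exact (Nat.pow_le_pow_iff_right hp.one_lt).mp hle
  have hdm' : (d : ℕ) = m := by
    by_contra hne'
    have h1 : (d : ℕ) ≤ m - 1 := by omega
    exact hprim d d.pos h1 hdvd'
  have hcards : Fintype.card E = Fintype.card K := by rw [hcardE, hcard, hdm']
  have hsurj : Function.Surjective (Subtype.val : E → K) :=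
    ((Fintype.bijective_iff_injective_and_card _).mpr ⟨Subtype.val_injective, hcards⟩).2
  have hEtop : E = ⊤ := by
    ext x
    simp only [Subring.mem_top, iff_true]
    obtain ⟨⟨y, hy⟩, rfl⟩ := hsurj x
    exact hy
  rw [eq_top_iff, ← hEtop, hE]
  exact Subring.closure_mono (Set.singleton_subset_iff.mpr
    ⟨hζne, 1, by rw [hζord, pow_one]⟩)

lemma conj_to_exists (A : K × K ≃+ K × K) (T : Set K)
    (h : conjSet K A (diagMul K '' T) = diagMul K '' T) :
    ∀ b ∈ T, ∃ a : K, ∀ v : K × K, A (b • v) = a • A v := by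
  intro b hb
  have hmem : diagMul K b ∈ conjSet K A (diagMul K '' T) := by
    rw [h]; exact ⟨b, hb, rfl⟩
  obtain ⟨f, ⟨a, ha, rfl⟩, hfa⟩ := hmem
  refine ⟨a, fun v => ?_⟩
  have h1 : A.symm (a • A v) = b • v := congrFun hfa v
  calc A (b • v) = A (A.symm (a • A v)) := by rw [h1]
    _ = a • A v := A.apply_symm_apply _

lemma conj_of_pow {p m : ℕ} (hcard : Fintype.card K = p ^ m)
    (A : K × K ≃+ K × K) (t : ℕ) (ht : t < m)
    (hA : ∀ (b : K) (v : K × K), A (b • v) = b ^ p ^ t • A v)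
    (T : Set K) (hstab : ∀ (k : ℕ) (a : K), a ∈ T → a ^ p ^ k ∈ T) :
    conjSet K A (diagMul K '' T) = diagMul K '' T := by
  have hsem : ∀ (b : K) (v : K × K), A.symm (b • A v) = b ^ p ^ (m - t) • v := by
    intro b v
    have h1 : A (b ^ p ^ (m - t) • v) = b • A v := by
      rw [hA, ← pow_mul, ← pow_add, Nat.sub_add_cancel (le_of_lt ht), ← hcard,
        FiniteField.pow_card]
    rw [← h1, A.symm_apply_apply]
  ext f
  constructor
  · rintro ⟨g, ⟨b, hb, rfl⟩, rfl⟩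
    refine ⟨b ^ p ^ (m - t), hstab _ _ hb, ?_⟩
    funext v
    exact (hsem b v).symm
  · rintro ⟨b, hb, rfl⟩
    refine ⟨diagMul K (b ^ p ^ t), ⟨b ^ p ^ t, hstab t b hb, rfl⟩, ?_⟩
    funext v
    show A.symm (b ^ p ^ t • A v) = b • v
    rw [← hA, A.symm_apply_apply]

end Helpers

/-- Normalizer of `S_R` in `GL(M × M)`: an additive (equivalently `𝔽_p`-linear)
bijection `A` of `M × M` satisfies `A⁻¹·S_R·A = S_R` iff it has the form
`A(x,y) = (c₁x^{p^t} + c₂y^{p^t}, c₃x^{p^t} + c₄y^{p^t})` for some `0 ≤ t < m`;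
moreover the normalizer of `S_R` coincides with the normalizer of the full group
`S = {diag(m_a,m_a) : a ∈ M^×}`. -/
theorem stmt_8 (p m p' : ℕ) (hp : Nat.Prime p) (hp2 : p ≠ 2) (hm : 2 < m)
    (K : Type) [Field K] [Fintype K] (hcard : Fintype.card K = p ^ m)
    (hp' : Nat.Prime p') (hdvd : p' ∣ p ^ m - 1)
    (hprim : ∀ i : ℕ, 1 ≤ i → i ≤ m - 1 → ¬ p' ∣ p ^ i - 1)
    (A : K × K ≃+ K × K) :
    ((conjSet K A (diagMul K '' {a : K | a ≠ 0 ∧ ∃ j : ℕ, orderOf a = p' ^ j})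
          = diagMul K '' {a : K | a ≠ 0 ∧ ∃ j : ℕ, orderOf a = p' ^ j}) ↔
      ∃ (c₁ c₂ c₃ c₄ : K) (t : ℕ), t < m ∧
        ∀ x y : K, A (x, y) = (c₁ * x ^ p ^ t + c₂ * y ^ p ^ t,
                               c₃ * x ^ p ^ t + c₄ * y ^ p ^ t)) ∧
    ((conjSet K A (diagMul K '' {a : K | a ≠ 0 ∧ ∃ j : ℕ, orderOf a = p' ^ j})
          = diagMul K '' {a : K | a ≠ 0 ∧ ∃ j : ℕ, orderOf a = p' ^ j}) ↔
      (conjSet K A (diagMul K '' {a : K | a ≠ 0}) = diagMul K '' {a : K | a ≠ 0})) := by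
  have hm1 : 0 < m := by omega
  haveI : Fact p.Prime := ⟨hp⟩
  haveI : CharP K p := aux_charP hp hm1 hcard
  have hclosR : Subring.closure {a : K | a ≠ 0 ∧ ∃ j : ℕ, orderOf a = p' ^ j} = ⊤ :=
    closure_R hp hm1 hcard hp' hdvd hprim
  have hclosU : Subring.closure {a : K | a ≠ 0} = ⊤ := by
    rw [eq_top_iff]
    intro x _
    by_cases hx : x = 0
    · rw [hx]; exact Subring.zero_mem _
    · exact Subring.subset_closure hx
  have hinj : ∀ k : ℕ, Function.Injective (fun x : K => x ^ p ^ k) := by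
    intro k
    have he : (fun x : K => x ^ p ^ k) = (frobenius K p)^[k] := by
      funext x; rw [iterate_frobenius]
    rw [he]
    exact Function.Injective.iterate (frobenius K p).injective k
  have hstabR : ∀ (k : ℕ) (a : K),
      a ∈ {a : K | a ≠ 0 ∧ ∃ j : ℕ, orderOf a = p' ^ j} →
      a ^ p ^ k ∈ {a : K | a ≠ 0 ∧ ∃ j : ℕ, orderOf a = p' ^ j} := by
    rintro k a ⟨ha0, j, hj⟩
    refine ⟨pow_ne_zero _ ha0, j, ?_⟩
    have : a ^ p ^ k = powMonoidHom (p ^ k) a := rfl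
    rw [this, orderOf_injective (powMonoidHom (p ^ k)) (hinj k) a, hj]
  have hstabU : ∀ (k : ℕ) (a : K), a ∈ {a : K | a ≠ 0} →
      a ^ p ^ k ∈ {a : K | a ≠ 0} := fun k a ha => pow_ne_zero _ ha
  have hform : ∀ T : Set K, Subring.closure T = ⊤ →
      conjSet K A (diagMul K '' T) = diagMul K '' T →
      ∃ (c₁ c₂ c₃ c₄ : K) (t : ℕ), t < m ∧
        ∀ x y : K, A (x, y) = (c₁ * x ^ p ^ t + c₂ * y ^ p ^ t,
                               c₃ * x ^ p ^ t + c₄ * y ^ p ^ t) := by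
    intro T hT hconj
    obtain ⟨σ, hσ⟩ := semilinear_of_conj A T hT (conj_to_exists A T hconj)
    obtain ⟨t, htm, hσt⟩ := ringHom_eq_pow hp hm1 hcard σ
    refine ⟨(A (1, 0)).1, (A (0, 1)).1, (A (1, 0)).2, (A (0, 1)).2, t, htm, ?_⟩
    intro x y
    have hxy : ((x : K), (y : K)) = x • ((1 : K), (0 : K)) + y • ((0 : K), (1 : K)) := by
      simp [Prod.ext_iff]
    rw [hxy, map_add, hσ, hσ, hσt, hσt]
    simp [Prod.ext_iff, mul_comm]
  have hback : ∀ T : Set K, (∀ (k : ℕ) (a : K), a ∈ T → a ^ p ^ k ∈ T) →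
      (∃ (c₁ c₂ c₃ c₄ : K) (t : ℕ), t < m ∧
        ∀ x y : K, A (x, y) = (c₁ * x ^ p ^ t + c₂ * y ^ p ^ t,
                               c₃ * x ^ p ^ t + c₄ * y ^ p ^ t)) →
      conjSet K A (diagMul K '' T) = diagMul K '' T := by
    rintro T hstab ⟨c₁, c₂, c₃, c₄, t, htm, hf⟩
    apply conj_of_pow hcard A t htm ?_ T hstab
    intro b v
    obtain ⟨x, y⟩ := v
    show A (b * x, b * y) = b ^ p ^ t • A (x, y)
    rw [hf, hf]
    simp only [Prod.smul_mk, smul_eq_mul, Prod.mk.injEq, mul_pow]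
    constructor <;> ring
  refine ⟨⟨fun h => hform _ hclosR h, fun h => hback _ hstabR h⟩,
    ⟨fun h => hback _ hstabU (hform _ hclosR h),
     fun h => hback _ hstabR (hform _ hclosU h)⟩⟩
end

section
/- Let α ∈ M^× be a non-square and let ⋆ be the Zhou–Pott multiplication (x,y) ⋆ (u,v) = (x^q u + x u^q + α(y^q v + y v^q), x^{qQ} v + y u^{qQ}) on M × M. Then the family-S pre-semifield P_{q,B,a} is not isotopic to (M × M, +, ⋆): no triple (N,L,K) of 𝔽_p-linear bijections of M × M satisfies N((x,y) ∗ (u,v)) = L(x,y) ⋆ K(u,v) for all (x,y),(u,v). -/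
/-- The family-`S` pre-semifield multiplication `P_{q,B,a}` on `M × M` (with `A = a/B`):
`(x,y) ∗ (u,v) = (x^q u + x u^q + B(y^q v + y v^q), x^r v + y u^r + A(x v^r + y^r u))`. -/
def sstar (K : Type) [Field K] (q r : ℕ) (B A : K) (z w : K × K) : K × K :=
  (z.1 ^ q * w.1 + z.1 * w.1 ^ q + B * (z.2 ^ q * w.2 + z.2 * w.2 ^ q),
   z.1 ^ r * w.2 + z.2 * w.1 ^ r + A * (z.1 * w.2 ^ r + z.2 ^ r * w.1))

/-- The Zhou–Pott multiplication
`(x,y) ⋆ (u,v) = (x^q u + x u^q + α(y^q v + y v^q), x^{qQ} v + y u^{qQ})`,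
where the exponent `r` plays the role of `qQ`. -/
def zpstar (K : Type) [Field K] (q r : ℕ) (α : K) (z w : K × K) : K × K :=
  (z.1 ^ q * w.1 + z.1 * w.1 ^ q + α * (z.2 ^ q * w.2 + z.2 * w.2 ^ q),
   z.1 ^ r * w.2 + z.2 * w.1 ^ r)


section Infra

variable {p m : ℕ} {K : Type} [Field K] [Fintype K]

theorem auxCharP (hp : p.Prime) (hm : 0 < m) (hcard : Fintype.card K = p ^ m) : CharP K p := by
  obtain ⟨n, hcprime, hcard'⟩ := FiniteField.card K (ringChar K)
  have hdvd : p ∣ ringChar K := by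
    have h1 : p ∣ p ^ m := dvd_pow_self p hm.ne'
    rw [← hcard, hcard'] at h1
    exact hp.dvd_of_dvd_pow h1
  have : p = ringChar K := ((Nat.prime_dvd_prime_iff_eq hp hcprime).mp hdvd)
  rw [this]
  exact ringChar.charP K

theorem pow_pm (hcard : Fintype.card K = p ^ m) (x : K) : x ^ p ^ m = x := by
  have := FiniteField.pow_card x
  rwa [hcard] at this

theorem pow_exp_mod (hcard : Fintype.card K = p ^ m) (x : K) (a : ℕ) :
    x ^ p ^ a = x ^ p ^ (a % m) := by
  have step : ∀ t s, x ^ p ^ (s + m * t) = x ^ p ^ s := by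
    intro t
    induction t with
    | zero => intro s; simp
    | succ t ih =>
      intro s
      have h1 : s + m * (t + 1) = (s + m * t) + m := by ring
      rw [h1, pow_add, pow_mul, pow_pm hcard, ih]
  conv_lhs => rw [← Nat.mod_add_div a m, step (a / m) (a % m)]

theorem frob_exp_inj_aux (hp : p.Prime) (hcard : Fintype.card K = p ^ m)
    {i j : ℕ} (hij : i < j) (hj : j < m)
    (h : ∀ x : K, x ^ p ^ i = x ^ p ^ j) : False := by
  classical
  obtain ⟨g, hg⟩ := IsCyclic.exists_generator (α := Kˣ)
  have horder : orderOf g = p ^ m - 1 := by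
    rw [orderOf_eq_card_of_forall_mem_zpowers hg, Nat.card_eq_fintype_card,
      Fintype.card_units, hcard]
  have hgu : g ^ p ^ i = g ^ p ^ j := by
    have hx := h (g : K)
    ext
    simpa [Units.val_pow_eq_pow_val] using hx
  have hmod : p ^ i ≡ p ^ j [MOD p ^ m - 1] := by
    rw [← horder]; exact (pow_eq_pow_iff_modEq).mp hgu
  have hle : p ^ i ≤ p ^ j := Nat.pow_le_pow_right hp.pos hij.le
  have hdvd : p ^ m - 1 ∣ p ^ j - p ^ i := (Nat.modEq_iff_dvd' hle).mp hmod
  have hposd : 0 < p ^ j - p ^ i := by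
    have := Nat.pow_lt_pow_right hp.one_lt hij
    omega
  have hlt : p ^ j - p ^ i < p ^ m - 1 := by
    have h1 : p ^ j < p ^ m := Nat.pow_lt_pow_right hp.one_lt hj
    have h2 : 1 ≤ p ^ i := Nat.one_le_pow _ _ hp.pos
    omega
  have := Nat.le_of_dvd hposd hdvd
  omega

theorem frob_exp_inj (hp : p.Prime) (hcard : Fintype.card K = p ^ m)
    {i j : ℕ} (hi : i < m) (hj : j < m)
    (h : ∀ x : K, x ^ p ^ i = x ^ p ^ j) : i = j := by
  rcases lt_trichotomy i j with hlt | heq | hgt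
  · exact absurd (frob_exp_inj_aux hp hcard hlt hj h) (by simp)
  · exact heq
  · exact absurd (frob_exp_inj_aux hp hcard hgt hi (fun x => (h x).symm)) (by simp)

set_option maxHeartbeats 1000000 in
/-- Two-variable Frobenius-monomial coefficient extraction. -/
theorem extract2 (hp : p.Prime) (hcard : Fintype.card K = p ^ m) [NeZero m]
    (C : ZMod m → ZMod m → K)
    (h : ∀ x u : K,
      ∑ a : ZMod m, ∑ b : ZMod m, C a b * (x ^ p ^ a.val * u ^ p ^ b.val) = 0) :
    ∀ a b, C a b = 0 := by
  classical
  let χ : ZMod m × ZMod m → ((K × K) →* K) := fun ab =>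
    { toFun := fun w => w.1 ^ p ^ ab.1.val * w.2 ^ p ^ ab.2.val
      map_one' := by simp
      map_mul' := fun w w' => by
        simp only [Prod.fst_mul, Prod.snd_mul, mul_pow]
        ring }
  have hinj : Function.Injective χ := by
    intro ab ab' hfg
    have h1 : ∀ x : K, x ^ p ^ ab.1.val = x ^ p ^ ab'.1.val := by
      intro x
      have := DFunLike.congr_fun hfg (x, 1)
      simpa [χ] using this
    have h2 : ∀ u : K, u ^ p ^ ab.2.val = u ^ p ^ ab'.2.val := by
      intro u
      have := DFunLike.congr_fun hfg (1, u)
      simpa [χ] using this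
    have e1 : ab.1.val = ab'.1.val :=
      frob_exp_inj hp hcard (ZMod.val_lt _) (ZMod.val_lt _) h1
    have e2 : ab.2.val = ab'.2.val :=
      frob_exp_inj hp hcard (ZMod.val_lt _) (ZMod.val_lt _) h2
    have : ab.1 = ab'.1 := ZMod.val_injective m e1
    have : ab.2 = ab'.2 := ZMod.val_injective m e2
    exact Prod.ext ‹ab.1 = ab'.1› ‹ab.2 = ab'.2›
  have li : LinearIndependent K (fun ab : ZMod m × ZMod m => ⇑(χ ab)) :=
    (linearIndependent_monoidHom (K × K) K).comp χ hinj
  intro a b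
  have hsum : ∑ ab : ZMod m × ZMod m, (C ab.1 ab.2) • ⇑(χ ab) = 0 := by
    funext w
    rw [Finset.sum_apply]
    simp only [Pi.smul_apply, smul_eq_mul, χ, MonoidHom.coe_mk, OneHom.coe_mk]
    rw [Fintype.sum_prod_type]
    simpa using h w.1 w.2
  have := Fintype.linearIndependent_iff.mp li (fun ab => C ab.1 ab.2) hsum (a, b)
  simpa using this

set_option maxHeartbeats 1000000 in
/-- Every additive map on a finite field is a `q`-polynomial. -/
theorem exists_coeffs (hp : p.Prime) (hm : 0 < m) (hcard : Fintype.card K = p ^ m) [NeZero m]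
    (f : K →+ K) : ∃ c : ZMod m → K, ∀ x, f x = ∑ i : ZMod m, c i * x ^ p ^ i.val := by
  classical
  haveI : Fact p.Prime := ⟨hp⟩
  haveI : NeZero p := ⟨hp.pos.ne'⟩
  haveI : CharP K p := auxCharP hp hm hcard
  letI : Algebra (ZMod p) K := ZMod.algebra K p
  let frob : ZMod m → (K →ₗ[ZMod p] K) := fun i =>
    (AddMonoidHom.mk' (fun x : K => x ^ p ^ i.val)
      (fun x y => by exact add_pow_char_pow x y p i.val)).toZModLinearMap p
  -- linear independence of the Frobenius powers over K
  have hinj : Function.Injective (fun i : ZMod m => powMonoidHom (p ^ i.val) : ZMod m → K →* K) := by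
    intro i j hij
    have hij' : (powMonoidHom (p ^ i.val) : K →* K) = powMonoidHom (p ^ j.val) := hij
    have : ∀ x : K, x ^ p ^ i.val = x ^ p ^ j.val := by
      intro x
      have := DFunLike.congr_fun hij' x
      simpa [powMonoidHom_apply] using this
    exact ZMod.val_injective m (frob_exp_inj hp hcard (ZMod.val_lt _) (ZMod.val_lt _) this)
  have lifun : LinearIndependent K (fun i : ZMod m => ⇑(powMonoidHom (p ^ i.val) : K →* K)) :=
    (linearIndependent_monoidHom K K).comp _ hinj
  let ℓ : (K →ₗ[ZMod p] K) →ₗ[K] (K → K) := LinearMap.ltoFun (ZMod p) K K K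
  have hli : LinearIndependent K frob := by
    apply LinearIndependent.of_comp ℓ
    have hfe : ⇑ℓ ∘ frob = fun i : ZMod m => ⇑(powMonoidHom (p ^ i.val) : K →* K) := rfl
    rw [hfe]
    exact lifun
  -- dimension count
  have hfr1 : Module.finrank (ZMod p) K = m := by
    have hc := Module.card_eq_pow_finrank (K := ZMod p) (V := K)
    rw [ZMod.card, hcard] at hc
    exact (Nat.pow_right_injective hp.two_le hc.symm)
  haveI : Module.Free (ZMod p) K := Module.Free.of_divisionRing _ _
  have hfr2 : Module.finrank (ZMod p) (K →ₗ[ZMod p] K) = m * m := by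
    rw [Module.finrank_linearMap, hfr1]
  haveI : IsScalarTower (ZMod p) K (K →ₗ[ZMod p] K) :=
    ⟨fun r c g => LinearMap.ext fun x => by
      simp only [LinearMap.smul_apply]
      rw [smul_assoc]⟩
  have htower : Module.finrank (ZMod p) K * Module.finrank K (K →ₗ[ZMod p] K)
      = Module.finrank (ZMod p) (K →ₗ[ZMod p] K) := Module.finrank_mul_finrank _ _ _
  have hfrKE : Module.finrank K (K →ₗ[ZMod p] K) = m := by
    rw [hfr1, hfr2] at htower
    exact Nat.eq_of_mul_eq_mul_left hm htower
  have hcardZm : Fintype.card (ZMod m) = m := ZMod.card m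
  let B := basisOfLinearIndependentOfCardEqFinrank hli (by rw [hcardZm, hfrKE])
  have hB : ⇑B = frob := coe_basisOfLinearIndependentOfCardEqFinrank hli _
  let fE := f.toZModLinearMap p
  refine ⟨fun i => B.repr fE i, fun x => ?_⟩
  have hrepr := B.sum_repr fE
  have : fE x = (∑ i : ZMod m, B.repr fE i • B i) x := by rw [hrepr]
  rw [LinearMap.sum_apply] at this
  calc f x = fE x := rfl
    _ = ∑ i : ZMod m, B.repr fE i • (B i) x := by
        rw [this]; simp [LinearMap.smul_apply]
    _ = ∑ i : ZMod m, B.repr fE i * x ^ p ^ i.val := by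
        refine Finset.sum_congr rfl fun i _ => ?_
        rw [hB]
        simp [frob, smul_eq_mul]

end Infra
section MainAux

variable {p m : ℕ} {K : Type} [Field K] [Fintype K]

theorem pow_p_shift (hcard : Fintype.card K = p ^ m) [NeZero m]
    (x : K) (i : ZMod m) (n : ℕ) :
    (x ^ p ^ n) ^ p ^ i.val = x ^ p ^ ((i + (n : ZMod m)).val) := by
  have h1 : (x ^ p ^ n) ^ p ^ i.val = x ^ p ^ (n + i.val) := by
    rw [← pow_mul, ← pow_add]
  have h2 : ((i + (n : ZMod m)).val) = (i.val + n % m) % m := by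
    rw [ZMod.val_add, ZMod.val_natCast]
  have h3 : (i.val + n % m) % m = (n + i.val) % m := by
    rw [Nat.add_comm n i.val, Nat.add_mod i.val n m,
      Nat.mod_eq_of_lt (ZMod.val_lt i)]
  rw [h1, h2, h3, ← pow_exp_mod hcard]

theorem sum_delta_left [NeZero m] (g : ZMod m → K) (d : ZMod m)
    (M : ZMod m → ZMod m → K) :
    ∑ a : ZMod m, ∑ b : ZMod m, (if a = b + d then g b else 0) * M a b
      = ∑ i : ZMod m, g i * M (i + d) i := by
  classical
  rw [Finset.sum_comm]
  refine Finset.sum_congr rfl fun b _ => ?_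
  have hstep : ∀ a : ZMod m, (if a = b + d then g b else 0) * M a b
      = if a = b + d then g b * M a b else 0 := by
    intro a; split <;> simp
  simp_rw [hstep]
  rw [Finset.sum_ite_eq' Finset.univ (b + d) (fun a => g b * M a b)]
  simp

theorem sum_delta_right [NeZero m] (g : ZMod m → K) (d : ZMod m)
    (M : ZMod m → ZMod m → K) :
    ∑ a : ZMod m, ∑ b : ZMod m, (if b = a + d then g a else 0) * M a b
      = ∑ i : ZMod m, g i * M i (i + d) := by
  classical
  refine Finset.sum_congr rfl fun a _ => ?_
  have hstep : ∀ b : ZMod m, (if b = a + d then g a else 0) * M a b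
      = if b = a + d then g a * M a b else 0 := by
    intro b; split <;> simp
  simp_rw [hstep]
  rw [Finset.sum_ite_eq' Finset.univ (a + d) (fun b => g a * M a b)]
  simp

set_option maxHeartbeats 1000000 in
theorem coeff_eq (hp : p.Prime) (hcard : Fintype.card K = p ^ m) [NeZero m]
    (d : ZMod m) (c1 c2 f1 g1 f2 g2 : ZMod m → K)
    (hfun : ∀ x u : K,
      (∑ i : ZMod m, c1 i * (x ^ p ^ ((i + d).val) * u ^ p ^ i.val))
        + (∑ i : ZMod m, c2 i * (x ^ p ^ i.val * u ^ p ^ ((i + d).val)))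
      = (∑ i : ZMod m, f1 i * x ^ p ^ i.val) * (∑ i : ZMod m, g1 i * u ^ p ^ i.val)
        + (∑ i : ZMod m, f2 i * x ^ p ^ i.val) * (∑ i : ZMod m, g2 i * u ^ p ^ i.val)) :
    ∀ a b, (if a = b + d then c1 b else 0) + (if b = a + d then c2 a else 0)
      = f1 a * g1 b + f2 a * g2 b := by
  classical
  intro a b
  have h := extract2 hp hcard
    (fun a b => ((if a = b + d then c1 b else 0) + (if b = a + d then c2 a else 0))
      - (f1 a * g1 b + f2 a * g2 b)) ?_ a b
  · exact sub_eq_zero.mp h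
  intro x u
  have e1 := sum_delta_left (K := K) c1 d (fun a b => x ^ p ^ a.val * u ^ p ^ b.val)
  have e2 := sum_delta_right (K := K) c2 d (fun a b => x ^ p ^ a.val * u ^ p ^ b.val)
  have e3 : (∑ a : ZMod m, ∑ b : ZMod m, (f1 a * g1 b) * (x ^ p ^ a.val * u ^ p ^ b.val))
      = (∑ i : ZMod m, f1 i * x ^ p ^ i.val) * (∑ i : ZMod m, g1 i * u ^ p ^ i.val) := by
    rw [Finset.sum_mul_sum]
    exact Finset.sum_congr rfl fun a _ => Finset.sum_congr rfl fun b _ => by ring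
  have e4 : (∑ a : ZMod m, ∑ b : ZMod m, (f2 a * g2 b) * (x ^ p ^ a.val * u ^ p ^ b.val))
      = (∑ i : ZMod m, f2 i * x ^ p ^ i.val) * (∑ i : ZMod m, g2 i * u ^ p ^ i.val) := by
    rw [Finset.sum_mul_sum]
    exact Finset.sum_congr rfl fun a _ => Finset.sum_congr rfl fun b _ => by ring
  simp only [sub_mul, add_mul, Finset.sum_sub_distrib, Finset.sum_add_distrib]
  rw [e1, e2, e3, e4]
  linear_combination hfun x u

theorem det3_zero (p1 s1 p2 s2 p3 s3 r1 w1 r2 w2 r3 w3 : K) :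
    (p1*r1+s1*w1) * ((p2*r2+s2*w2)*(p3*r3+s3*w3) - (p2*r3+s2*w3)*(p3*r2+s3*w2))
  - (p1*r2+s1*w2) * ((p2*r1+s2*w1)*(p3*r3+s3*w3) - (p2*r3+s2*w3)*(p3*r1+s3*w1))
  + (p1*r3+s1*w3) * ((p2*r1+s2*w1)*(p3*r2+s3*w2) - (p2*r2+s2*w2)*(p3*r1+s3*w1)) = 0 := by
  ring

theorem two_k_ne_m {k : ℕ} (hodd : Odd (m / Nat.gcd k m)) (hk1 : 1 ≤ k)
    (h2k : 2 * k = m) : False := by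
  have hkd : k ∣ m := ⟨2, by omega⟩
  have hg : Nat.gcd k m = k := Nat.gcd_eq_left hkd
  have hdiv : m / k = 2 := by
    rw [show m = k * 2 by omega]
    exact Nat.mul_div_cancel_left 2 (by omega)
  rw [hg, hdiv] at hodd
  obtain ⟨t, ht⟩ := hodd
  omega

theorem not_dvd_2k {k : ℕ} (hm : 2 < m) (hk1 : 1 ≤ k) (hk2 : k ≤ m - 1)
    (hodd : Odd (m / Nat.gcd k m)) : ¬ m ∣ 2 * k := by
  rintro ⟨t, ht⟩
  have htlt : t < 2 := by
    by_contra hge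
    push_neg at hge
    have h2 : m * 2 ≤ m * t := Nat.mul_le_mul_left m hge
    omega
  have htpos : 0 < t := by
    rcases Nat.eq_zero_or_pos t with h0 | h
    · subst h0; omega
    · exact h
  have ht1 : t = 1 := by omega
  subst ht1
  exact two_k_ne_m hodd hk1 (by omega)

theorem not_dvd_kh {k : ℕ} (hm : 2 < m) (hme : Even m) (hk1 : 1 ≤ k) (hk2 : k ≤ m - 1)
    (hodd : Odd (m / Nat.gcd k m)) : ¬ m ∣ (k + m / 2) := by
  have hm2 : m % 2 = 0 := Nat.even_iff.mp hme
  rintro ⟨t, ht⟩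
  have htlt : t < 2 := by
    by_contra hge
    push_neg at hge
    have h2 : m * 2 ≤ m * t := Nat.mul_le_mul_left m hge
    omega
  have htpos : 0 < t := by
    rcases Nat.eq_zero_or_pos t with h0 | h
    · subst h0; omega
    · exact h
  have ht1 : t = 1 := by omega
  subst ht1
  exact two_k_ne_m hodd hk1 (by omega)

theorem not_dvd_2kh {k : ℕ} (hm : 2 < m) (hme : Even m) (hk1 : 1 ≤ k)
    (hodd : Odd (m / Nat.gcd k m)) : ¬ m ∣ (2 * k + m / 2) := by
  have hm2 : m % 2 = 0 := Nat.even_iff.mp hme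
  rintro ⟨t, ht⟩
  have h4 : 4 * k + m = 2 * (m * t) := by omega
  set e := Nat.gcd k m with he
  have hepos : 0 < e := Nat.gcd_pos_of_pos_left m (by omega)
  obtain ⟨k', hk'⟩ : e ∣ k := Nat.gcd_dvd_left k m
  obtain ⟨s, hs⟩ : e ∣ m := Nat.gcd_dvd_right k m
  have hodds : Odd s := by
    have hms : m / e = s := by rw [hs]; exact Nat.mul_div_cancel_left s hepos
    rwa [hms] at hodd
  rw [hk', hs] at h4
  have h5 : e * (4 * k' + s) = e * (2 * (s * t)) := by
    calc e * (4 * k' + s) = 4 * (e * k') + e * s := by ring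
      _ = 2 * (e * s * t) := h4
      _ = e * (2 * (s * t)) := by ring
  have h6 : 4 * k' + s = 2 * (s * t) := Nat.eq_of_mul_eq_mul_left hepos h5
  obtain ⟨s', hs'⟩ := hodds
  omega

theorem not_dvd_h (hm : 2 < m) : ¬ m ∣ (m / 2) := by
  intro h
  have := Nat.le_of_dvd (by omega) h
  omega

end MainAux
set_option maxHeartbeats 2000000 in
/-- The family-`S` pre-semifield `P_{q,B,a}` is not isotopic to the Zhou–Pott
pre-semifield with non-square parameter `α`: no triple `(N,L,K)` of additive
(= `𝔽_p`-linear) bijections of `M × M` satisfies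
`N((x,y) ∗ (u,v)) = L(x,y) ⋆ K(u,v)` for all arguments. -/
theorem stmt_19 (p m k : ℕ) (hp : Nat.Prime p) (hp2 : p ≠ 2)
    (hm : 2 < m) (hmeven : Even m)
    (K : Type) [Field K] [Fintype K] (hcard : Fintype.card K = p ^ m)
    (hk1 : 1 ≤ k) (hk2 : k ≤ m - 1) (hodd : Odd (m / Nat.gcd k m))
    (a B : K) (ha0 : a ≠ 0) (haQ : a ^ p ^ (m / 2) = a)
    (hB0 : B ≠ 0) (hB : ¬ ∃ c : K, c ^ 2 = B)
    (α : K) (hα0 : α ≠ 0) (hα : ¬ ∃ c : K, c ^ 2 = α) :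
    ¬ ∃ N L K' : K × K ≃+ K × K, ∀ z w : K × K,
        N (sstar K (p ^ k) (p ^ (k + m / 2)) B (a / B) z w)
          = zpstar K (p ^ k) (p ^ (k + m / 2)) α (L z) (K' w) := by
  classical
  haveI : NeZero m := ⟨by omega⟩
  haveI : Fact p.Prime := ⟨hp⟩
  have hm0 : 0 < m := by omega
  haveI : CharP K p := auxCharP hp hm0 hcard
  rintro ⟨N, L, K', hiso⟩
  have hq0 : p ^ k ≠ 0 := (Nat.pow_pos hp.pos).ne'
  have hr0 : p ^ (k + m / 2) ≠ 0 := (Nat.pow_pos hp.pos).ne'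
  have hz1 : (0 : K) ^ p ^ k = 0 := zero_pow hq0
  have hz2 : (0 : K) ^ p ^ (k + m / 2) = 0 := zero_pow hr0
  have hA : a / B ≠ 0 := div_ne_zero ha0 hB0
  -- index facts
  have hdvd_k : ¬ m ∣ k := fun h => by have := Nat.le_of_dvd (by omega) h; omega
  have hdvd2k := not_dvd_2k hm hk1 hk2 hodd
  have hdvdkh := not_dvd_kh hm hmeven hk1 hk2 hodd
  have hdvd2kh := not_dvd_2kh hm hmeven hk1 hodd
  have hdvdh := not_dvd_h (m := m) hm
  have hσ0 : (k : ZMod m) ≠ 0 := by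
    rw [Ne, ZMod.natCast_eq_zero_iff]; exact hdvd_k
  have hσσ : (k : ZMod m) + (k : ZMod m) ≠ 0 := by
    intro h
    apply hdvd2k
    rw [← ZMod.natCast_eq_zero_iff]
    push_cast
    linear_combination h
  have hτ0 : ((k + m / 2 : ℕ) : ZMod m) ≠ 0 := by
    rw [Ne, ZMod.natCast_eq_zero_iff]; exact hdvdkh
  have hmmz : ((2 * (m / 2) : ℕ) : ZMod m) = 0 := by
    rw [show 2 * (m / 2) = m from by have := Nat.even_iff.mp hmeven; omega]
    exact ZMod.natCast_self m
  have hττ : ((k + m / 2 : ℕ) : ZMod m) + ((k + m / 2 : ℕ) : ZMod m) ≠ 0 := by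
    intro h
    apply hdvd2k
    rw [← ZMod.natCast_eq_zero_iff]
    push_cast at hmmz h ⊢
    linear_combination h - hmmz
  have hστ : (k : ZMod m) + ((k + m / 2 : ℕ) : ZMod m) ≠ 0 := by
    intro h
    apply hdvd2kh
    rw [← ZMod.natCast_eq_zero_iff]
    push_cast at h ⊢
    linear_combination h
  have hτσ : ((k + m / 2 : ℕ) : ZMod m) ≠ (k : ZMod m) := by
    intro h
    apply hdvdh
    rw [← ZMod.natCast_eq_zero_iff]
    push_cast at h ⊢
    linear_combination h
  -- generic refuters for if-conditions
  have notc : ∀ (c x : ZMod m), x ≠ 0 → ¬ (c = c + x) :=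
    fun c x hx h => hx ((left_eq_add).mp h)
  have notc2 : ∀ (c x y : ZMod m), x + y ≠ 0 → ¬ (c = c + x + y) :=
    fun c x y hxy h => hxy (by rw [add_assoc] at h; exact (left_eq_add).mp h)
  have notc3 : ∀ (c x y : ZMod m), x ≠ y → ¬ (c + x = c + y) :=
    fun c x y hxy h => hxy (add_left_cancel h)
  -- pair additivity helpers
  have hpair : ∀ x y : K, ((x + y : K), (0 : K)) = (x, (0 : K)) + (y, (0 : K)) := by
    intro x y; simp
  have hpair2 : ∀ x y : K, ((0 : K), (x + y : K)) = ((0 : K), x) + ((0 : K), y) := by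
    intro x y; simp
  -- the ten additive maps
  let N3 : K →+ K := AddMonoidHom.mk' (fun s => (N (s, 0)).2)
    (fun x y => by rw [hpair x y, map_add, Prod.snd_add])
  let N4 : K →+ K := AddMonoidHom.mk' (fun t => (N (0, t)).2)
    (fun x y => by rw [hpair2 x y, map_add, Prod.snd_add])
  let φ1 : K →+ K := AddMonoidHom.mk' (fun x => ((L (x, 0)).1) ^ p ^ (k + m / 2))
    (fun x y => by rw [hpair x y, map_add, Prod.fst_add, add_pow_char_pow])
  let χ1 : K →+ K := AddMonoidHom.mk' (fun x => (L (x, 0)).2)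
    (fun x y => by rw [hpair x y, map_add, Prod.snd_add])
  let φ2 : K →+ K := AddMonoidHom.mk' (fun y => ((L (0, y)).1) ^ p ^ (k + m / 2))
    (fun x y => by rw [hpair2 x y, map_add, Prod.fst_add, add_pow_char_pow])
  let χ2 : K →+ K := AddMonoidHom.mk' (fun y => (L (0, y)).2)
    (fun x y => by rw [hpair2 x y, map_add, Prod.snd_add])
  let ψ1 : K →+ K := AddMonoidHom.mk' (fun u => (K' (u, 0)).2)
    (fun x y => by rw [hpair x y, map_add, Prod.snd_add])
  let ω1 : K →+ K := AddMonoidHom.mk' (fun u => ((K' (u, 0)).1) ^ p ^ (k + m / 2))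
    (fun x y => by rw [hpair x y, map_add, Prod.fst_add, add_pow_char_pow])
  let ψ2 : K →+ K := AddMonoidHom.mk' (fun v => (K' (0, v)).2)
    (fun x y => by rw [hpair2 x y, map_add, Prod.snd_add])
  let ω2 : K →+ K := AddMonoidHom.mk' (fun v => ((K' (0, v)).1) ^ p ^ (k + m / 2))
    (fun x y => by rw [hpair2 x y, map_add, Prod.fst_add, add_pow_char_pow])
  obtain ⟨ν, hν⟩ := exists_coeffs hp hm0 hcard N3
  obtain ⟨ν', hν'⟩ := exists_coeffs hp hm0 hcard N4
  obtain ⟨P, hP⟩ := exists_coeffs hp hm0 hcard φ1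
  obtain ⟨S, hS⟩ := exists_coeffs hp hm0 hcard χ1
  obtain ⟨P', hP'⟩ := exists_coeffs hp hm0 hcard φ2
  obtain ⟨S', hS'⟩ := exists_coeffs hp hm0 hcard χ2
  obtain ⟨R, hR⟩ := exists_coeffs hp hm0 hcard ψ1
  obtain ⟨W, hW⟩ := exists_coeffs hp hm0 hcard ω1
  obtain ⟨R', hR'⟩ := exists_coeffs hp hm0 hcard ψ2
  obtain ⟨W', hW'⟩ := exists_coeffs hp hm0 hcard ω2
  -- the four functional identities (second coordinates of the isotopism relation)
  have hI1 : ∀ x u : K, N3 (x ^ p ^ k * u + x * u ^ p ^ k)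
      = φ1 x * ψ1 u + χ1 x * ω1 u := by
    intro x u
    have h := congrArg Prod.snd (hiso (x, 0) (u, 0))
    simp only [sstar, zpstar, hz1, hz2, mul_zero, zero_mul, add_zero, zero_add] at h
    exact h
  have hI2 : ∀ x v : K,
      N4 (x ^ p ^ (k + m / 2) * v + a / B * (x * v ^ p ^ (k + m / 2)))
      = φ1 x * ψ2 v + χ1 x * ω2 v := by
    intro x v
    have h := congrArg Prod.snd (hiso (x, 0) (0, v))
    simp only [sstar, zpstar, hz1, hz2, mul_zero, zero_mul, add_zero, zero_add] at h
    exact h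
  have hI3 : ∀ y u : K,
      N4 (y * u ^ p ^ (k + m / 2) + a / B * (y ^ p ^ (k + m / 2) * u))
      = φ2 y * ψ1 u + χ2 y * ω1 u := by
    intro y u
    have h := congrArg Prod.snd (hiso (0, y) (u, 0))
    simp only [sstar, zpstar, hz1, hz2, mul_zero, zero_mul, add_zero, zero_add] at h
    exact h
  have hI4 : ∀ y v : K, N3 (B * (y ^ p ^ k * v + y * v ^ p ^ k))
      = φ2 y * ψ2 v + χ2 y * ω2 v := by
    intro y v
    have h := congrArg Prod.snd (hiso (0, y) (0, v))
    simp only [sstar, zpstar, hz1, hz2, mul_zero, zero_mul, add_zero, zero_add] at h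
    exact h
  -- coefficient identities
  have hfun1 : ∀ x u : K,
      (∑ i : ZMod m, ν i * (x ^ p ^ ((i + (k : ZMod m)).val) * u ^ p ^ i.val))
        + (∑ i : ZMod m, ν i * (x ^ p ^ i.val * u ^ p ^ ((i + (k : ZMod m)).val)))
      = (∑ i : ZMod m, P i * x ^ p ^ i.val) * (∑ i : ZMod m, R i * u ^ p ^ i.val)
        + (∑ i : ZMod m, S i * x ^ p ^ i.val) * (∑ i : ZMod m, W i * u ^ p ^ i.val) := by
    intro x u
    have hL : (∑ i : ZMod m, ν i * (x ^ p ^ ((i + (k : ZMod m)).val) * u ^ p ^ i.val))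
        + (∑ i : ZMod m, ν i * (x ^ p ^ i.val * u ^ p ^ ((i + (k : ZMod m)).val)))
        = N3 (x ^ p ^ k * u + x * u ^ p ^ k) := by
      rw [hν, ← Finset.sum_add_distrib]
      refine Finset.sum_congr rfl fun i _ => ?_
      simp only [add_pow_char_pow, mul_pow]
      rw [pow_p_shift hcard x i k, pow_p_shift hcard u i k]
      ring
    rw [hL, ← hP x, ← hR u, ← hS x, ← hW u]
    exact hI1 x u
  have hfun2 : ∀ x v : K,
      (∑ i : ZMod m, ν' i * (x ^ p ^ ((i + ((k + m / 2 : ℕ) : ZMod m)).val) * v ^ p ^ i.val))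
        + (∑ i : ZMod m, (ν' i * (a / B) ^ p ^ i.val)
            * (x ^ p ^ i.val * v ^ p ^ ((i + ((k + m / 2 : ℕ) : ZMod m)).val)))
      = (∑ i : ZMod m, P i * x ^ p ^ i.val) * (∑ i : ZMod m, R' i * v ^ p ^ i.val)
        + (∑ i : ZMod m, S i * x ^ p ^ i.val) * (∑ i : ZMod m, W' i * v ^ p ^ i.val) := by
    intro x v
    have hL : (∑ i : ZMod m, ν' i * (x ^ p ^ ((i + ((k + m / 2 : ℕ) : ZMod m)).val) * v ^ p ^ i.val))
        + (∑ i : ZMod m, (ν' i * (a / B) ^ p ^ i.val)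
            * (x ^ p ^ i.val * v ^ p ^ ((i + ((k + m / 2 : ℕ) : ZMod m)).val)))
        = N4 (x ^ p ^ (k + m / 2) * v + a / B * (x * v ^ p ^ (k + m / 2))) := by
      rw [hν', ← Finset.sum_add_distrib]
      refine Finset.sum_congr rfl fun i _ => ?_
      simp only [add_pow_char_pow, mul_pow]
      rw [pow_p_shift hcard x i (k + m / 2), pow_p_shift hcard v i (k + m / 2)]
      ring
    rw [hL, ← hP x, ← hR' v, ← hS x, ← hW' v]
    exact hI2 x v
  have hfun3 : ∀ y u : K,
      (∑ i : ZMod m, (ν' i * (a / B) ^ p ^ i.val)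
          * (y ^ p ^ ((i + ((k + m / 2 : ℕ) : ZMod m)).val) * u ^ p ^ i.val))
        + (∑ i : ZMod m, ν' i * (y ^ p ^ i.val * u ^ p ^ ((i + ((k + m / 2 : ℕ) : ZMod m)).val)))
      = (∑ i : ZMod m, P' i * y ^ p ^ i.val) * (∑ i : ZMod m, R i * u ^ p ^ i.val)
        + (∑ i : ZMod m, S' i * y ^ p ^ i.val) * (∑ i : ZMod m, W i * u ^ p ^ i.val) := by
    intro y u
    have hL : (∑ i : ZMod m, (ν' i * (a / B) ^ p ^ i.val)
          * (y ^ p ^ ((i + ((k + m / 2 : ℕ) : ZMod m)).val) * u ^ p ^ i.val))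
        + (∑ i : ZMod m, ν' i * (y ^ p ^ i.val * u ^ p ^ ((i + ((k + m / 2 : ℕ) : ZMod m)).val)))
        = N4 (y * u ^ p ^ (k + m / 2) + a / B * (y ^ p ^ (k + m / 2) * u)) := by
      rw [hν', ← Finset.sum_add_distrib]
      refine Finset.sum_congr rfl fun i _ => ?_
      simp only [add_pow_char_pow, mul_pow]
      rw [pow_p_shift hcard y i (k + m / 2), pow_p_shift hcard u i (k + m / 2)]
      ring
    rw [hL, ← hP' y, ← hR u, ← hS' y, ← hW u]
    exact hI3 y u
  have hfun4 : ∀ y v : K,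
      (∑ i : ZMod m, (ν i * B ^ p ^ i.val)
          * (y ^ p ^ ((i + (k : ZMod m)).val) * v ^ p ^ i.val))
        + (∑ i : ZMod m, (ν i * B ^ p ^ i.val)
            * (y ^ p ^ i.val * v ^ p ^ ((i + (k : ZMod m)).val)))
      = (∑ i : ZMod m, P' i * y ^ p ^ i.val) * (∑ i : ZMod m, R' i * v ^ p ^ i.val)
        + (∑ i : ZMod m, S' i * y ^ p ^ i.val) * (∑ i : ZMod m, W' i * v ^ p ^ i.val) := by
    intro y v
    have hL : (∑ i : ZMod m, (ν i * B ^ p ^ i.val)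
          * (y ^ p ^ ((i + (k : ZMod m)).val) * v ^ p ^ i.val))
        + (∑ i : ZMod m, (ν i * B ^ p ^ i.val)
            * (y ^ p ^ i.val * v ^ p ^ ((i + (k : ZMod m)).val)))
        = N3 (B * (y ^ p ^ k * v + y * v ^ p ^ k)) := by
      rw [hν, ← Finset.sum_add_distrib]
      refine Finset.sum_congr rfl fun i _ => ?_
      simp only [add_pow_char_pow, mul_pow]
      rw [pow_p_shift hcard y i k, pow_p_shift hcard v i k]
      ring
    rw [hL, ← hP' y, ← hR' v, ← hS' y, ← hW' v]
    exact hI4 y v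
  have E1 : ∀ i j : ZMod m,
      (if i = j + (k : ZMod m) then ν j else 0)
        + (if j = i + (k : ZMod m) then ν i else 0) = P i * R j + S i * W j :=
    coeff_eq hp hcard _ ν ν P R S W hfun1
  have E2 : ∀ i j : ZMod m,
      (if i = j + ((k + m / 2 : ℕ) : ZMod m) then ν' j else 0)
        + (if j = i + ((k + m / 2 : ℕ) : ZMod m) then ν' i * (a / B) ^ p ^ i.val else 0)
      = P i * R' j + S i * W' j :=
    coeff_eq hp hcard _ ν' (fun i => ν' i * (a / B) ^ p ^ i.val) P R' S W' hfun2
  have E3 : ∀ i j : ZMod m,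
      (if i = j + ((k + m / 2 : ℕ) : ZMod m) then ν' j * (a / B) ^ p ^ j.val else 0)
        + (if j = i + ((k + m / 2 : ℕ) : ZMod m) then ν' i else 0)
      = P' i * R j + S' i * W j :=
    coeff_eq hp hcard _ (fun i => ν' i * (a / B) ^ p ^ i.val) ν' P' R S' W hfun3
  have E4 : ∀ i j : ZMod m,
      (if i = j + (k : ZMod m) then ν j * B ^ p ^ j.val else 0)
        + (if j = i + (k : ZMod m) then ν i * B ^ p ^ i.val else 0)
      = P' i * R' j + S' i * W' j :=
    coeff_eq hp hcard _ (fun i => ν i * B ^ p ^ i.val) (fun i => ν i * B ^ p ^ i.val)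
      P' R' S' W' hfun4
  -- endgame
  by_cases hν0 : ∀ i, ν i = 0
  · by_cases hν'0 : ∀ i, ν' i = 0
    · -- N is not surjective: contradiction
      obtain ⟨⟨z1, z2⟩, hz⟩ := N.surjective ((0 : K), (1 : K))
      have h2 : N (z1, z2) = N (z1, 0) + N (0, z2) := by
        rw [← map_add]
        congr 1
        simp
      have hsnd := congrArg Prod.snd hz
      rw [h2, Prod.snd_add] at hsnd
      have e3 : (N (z1, 0)).2 = N3 z1 := rfl
      have e4 : (N (0, z2)).2 = N4 z2 := rfl
      rw [e3, e4, hν, hν'] at hsnd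
      simp [hν0, hν'0] at hsnd
    · -- Case 2 : some ν' c ≠ 0
      push_neg at hν'0
      obtain ⟨c, hc⟩ := hν'0
      have M11 : P c * R' (c + ((k + m / 2 : ℕ) : ZMod m))
          + S c * W' (c + ((k + m / 2 : ℕ) : ZMod m))
          = ν' c * (a / B) ^ p ^ c.val := by
        have e := E2 c (c + ((k + m / 2 : ℕ) : ZMod m))
        rw [if_neg (notc2 c _ _ hττ), if_pos rfl, zero_add] at e
        exact e.symm
      have M12 : P c * R' c + S c * W' c = 0 := by
        have e := E2 c c
        rw [if_neg (notc c _ hτ0), if_neg (notc c _ hτ0), add_zero] at e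
        exact e.symm
      have M13 : P c * R (c + ((k + m / 2 : ℕ) : ZMod m))
          + S c * W (c + ((k + m / 2 : ℕ) : ZMod m)) = 0 := by
        have e := E1 c (c + ((k + m / 2 : ℕ) : ZMod m))
        simp only [hν0, ite_self, add_zero] at e
        exact e.symm
      have M21 : P (c + ((k + m / 2 : ℕ) : ZMod m)) * R' (c + ((k + m / 2 : ℕ) : ZMod m))
          + S (c + ((k + m / 2 : ℕ) : ZMod m)) * W' (c + ((k + m / 2 : ℕ) : ZMod m)) = 0 := by
        have e := E2 (c + ((k + m / 2 : ℕ) : ZMod m)) (c + ((k + m / 2 : ℕ) : ZMod m))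
        rw [if_neg (notc _ _ hτ0), if_neg (notc _ _ hτ0), add_zero] at e
        exact e.symm
      have M22 : P (c + ((k + m / 2 : ℕ) : ZMod m)) * R' c
          + S (c + ((k + m / 2 : ℕ) : ZMod m)) * W' c = ν' c := by
        have e := E2 (c + ((k + m / 2 : ℕ) : ZMod m)) c
        rw [if_pos rfl, if_neg (notc2 c _ _ hττ), add_zero] at e
        exact e.symm
      have M23 : P (c + ((k + m / 2 : ℕ) : ZMod m)) * R (c + ((k + m / 2 : ℕ) : ZMod m))
          + S (c + ((k + m / 2 : ℕ) : ZMod m)) * W (c + ((k + m / 2 : ℕ) : ZMod m)) = 0 := by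
        have e := E1 (c + ((k + m / 2 : ℕ) : ZMod m)) (c + ((k + m / 2 : ℕ) : ZMod m))
        simp only [hν0, ite_self, add_zero] at e
        exact e.symm
      have M31 : P' c * R' (c + ((k + m / 2 : ℕ) : ZMod m))
          + S' c * W' (c + ((k + m / 2 : ℕ) : ZMod m)) = 0 := by
        have e := E4 c (c + ((k + m / 2 : ℕ) : ZMod m))
        simp only [hν0, zero_mul, ite_self, add_zero] at e
        exact e.symm
      have M32 : P' c * R' c + S' c * W' c = 0 := by
        have e := E4 c c
        simp only [hν0, zero_mul, ite_self, add_zero] at e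
        exact e.symm
      have M33 : P' c * R (c + ((k + m / 2 : ℕ) : ZMod m))
          + S' c * W (c + ((k + m / 2 : ℕ) : ZMod m)) = ν' c := by
        have e := E3 c (c + ((k + m / 2 : ℕ) : ZMod m))
        rw [if_neg (notc2 c _ _ hττ), if_pos rfl, zero_add] at e
        exact e.symm
      have hdet := det3_zero (P c) (S c)
        (P (c + ((k + m / 2 : ℕ) : ZMod m))) (S (c + ((k + m / 2 : ℕ) : ZMod m)))
        (P' c) (S' c)
        (R' (c + ((k + m / 2 : ℕ) : ZMod m))) (W' (c + ((k + m / 2 : ℕ) : ZMod m)))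
        (R' c) (W' c)
        (R (c + ((k + m / 2 : ℕ) : ZMod m))) (W (c + ((k + m / 2 : ℕ) : ZMod m)))
      rw [M11, M12, M13, M21, M22, M23, M31, M32, M33] at hdet
      have hzero : ν' c * (a / B) ^ p ^ c.val * (ν' c * ν' c) = 0 := by
        linear_combination hdet
      exact (mul_ne_zero (mul_ne_zero hc (pow_ne_zero _ hA))
        (mul_ne_zero hc hc)) hzero
  · -- Case 1 : some ν c ≠ 0
    push_neg at hν0
    obtain ⟨c, hc⟩ := hν0
    have M11 : P c * R c + S c * W c = 0 := by
      have e := E1 c c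
      rw [if_neg (notc c _ hσ0), add_zero] at e
      exact e.symm
    have M12 : P c * R (c + (k : ZMod m)) + S c * W (c + (k : ZMod m)) = ν c := by
      have e := E1 c (c + (k : ZMod m))
      rw [if_neg (notc2 c _ _ hσσ), if_pos rfl, zero_add] at e
      exact e.symm
    have M13 : P c * R' (c + (k : ZMod m)) + S c * W' (c + (k : ZMod m)) = 0 := by
      have e := E2 c (c + (k : ZMod m))
      rw [if_neg (notc2 c _ _ hστ), if_neg (notc3 c _ _ (Ne.symm hτσ)), add_zero] at e
      exact e.symm
    have M21 : P (c + (k : ZMod m)) * R c + S (c + (k : ZMod m)) * W c = ν c := by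
      have e := E1 (c + (k : ZMod m)) c
      rw [if_pos rfl, if_neg (notc2 c _ _ hσσ), add_zero] at e
      exact e.symm
    have M22 : P (c + (k : ZMod m)) * R (c + (k : ZMod m))
        + S (c + (k : ZMod m)) * W (c + (k : ZMod m)) = 0 := by
      have e := E1 (c + (k : ZMod m)) (c + (k : ZMod m))
      rw [if_neg (notc _ _ hσ0), add_zero] at e
      exact e.symm
    have M23 : P (c + (k : ZMod m)) * R' (c + (k : ZMod m))
        + S (c + (k : ZMod m)) * W' (c + (k : ZMod m)) = 0 := by
      have e := E2 (c + (k : ZMod m)) (c + (k : ZMod m))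
      rw [if_neg (notc _ _ hτ0), if_neg (notc _ _ hτ0), add_zero] at e
      exact e.symm
    have M31 : P' c * R c + S' c * W c = 0 := by
      have e := E3 c c
      rw [if_neg (notc c _ hτ0), if_neg (notc c _ hτ0), add_zero] at e
      exact e.symm
    have M32 : P' c * R (c + (k : ZMod m)) + S' c * W (c + (k : ZMod m)) = 0 := by
      have e := E3 c (c + (k : ZMod m))
      rw [if_neg (notc2 c _ _ hστ), if_neg (notc3 c _ _ (Ne.symm hτσ)), add_zero] at e
      exact e.symm
    have M33 : P' c * R' (c + (k : ZMod m)) + S' c * W' (c + (k : ZMod m))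
        = ν c * B ^ p ^ c.val := by
      have e := E4 c (c + (k : ZMod m))
      rw [if_neg (notc2 c _ _ hσσ), if_pos rfl, zero_add] at e
      exact e.symm
    have hdet := det3_zero (P c) (S c)
      (P (c + (k : ZMod m))) (S (c + (k : ZMod m)))
      (P' c) (S' c)
      (R c) (W c)
      (R (c + (k : ZMod m))) (W (c + (k : ZMod m)))
      (R' (c + (k : ZMod m))) (W' (c + (k : ZMod m)))
    rw [M11, M12, M13, M21, M22, M23, M31, M32, M33] at hdet
    have hzero : ν c * ν c * (ν c * B ^ p ^ c.val) = 0 := by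
      linear_combination -hdet
    exact (mul_ne_zero (mul_ne_zero hc hc)
      (mul_ne_zero hc (pow_ne_zero _ hB0))) hzero
end
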